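/- Let Z be a section of the constraint distribution D of a nonholonomic mechanical system with Lagrangian L = ½G(u,u) − V. If Z^{TQ}[L] = 0 on D (where Z^{TQ} is the tangent lift), then Z[V] = 0 and (£_Z G)(u,u) = 0 for all u ∈ D. Conversely, if Z[V] = 0 and (£_Z G)(u,u) = 0 for u ∈ D, then Z^{TQ}[L] = 0 on D. -/

import Mathlib

open scoped BigOperators

/-- The tangent lift `Z^{TQ}` of a vector field `Z` on `Q = ℝⁿ`, applied to a
function `F` on `TQ = ℝⁿ × ℝⁿ`:
`Z^{TQ}[F](q,u) = dF(q,u)·(Z(q), DZ(q)·u)`. -/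
noncomputable def tangentLift {n : ℕ} (Z : (Fin n → ℝ) → (Fin n → ℝ))
    (F : (Fin n → ℝ) × (Fin n → ℝ) → ℝ) (q u : Fin n → ℝ) : ℝ :=
  fderiv ℝ F (q, u) (Z q, fderiv ℝ Z q u)

/-- The Lie derivative of the metric `G` along `Z`, evaluated on `(u,u)`:
`(£_Z G)(u,u) = Σ_{ij} (Z^k ∂_k G_{ij} + G_{kj} ∂_i Z^k + G_{ik} ∂_j Z^k) uⁱ uʲ`. -/
noncomputable def lieDerivMetric {n : ℕ}
    (G : (Fin n → ℝ) → Matrix (Fin n) (Fin n) ℝ)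
    (Z : (Fin n → ℝ) → (Fin n → ℝ)) (q u : Fin n → ℝ) : ℝ :=
  ∑ i, ∑ j,
    (fderiv ℝ (fun p => G p i j) q (Z q)
      + (∑ k, G q k j * fderiv ℝ (fun p => Z p k) q (Pi.single i 1))
      + (∑ k, G q i k * fderiv ℝ (fun p => Z p k) q (Pi.single j 1)))
    * u i * u j

open ContinuousLinearMap in
/-- The derivative of the Lagrangian, computed explicitly. -/
lemma fderiv_L {n : ℕ} (G : (Fin n → ℝ) → Matrix (Fin n) (Fin n) ℝ)
    (V : (Fin n → ℝ) → ℝ)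
    (hG : ∀ i j, Differentiable ℝ fun q => G q i j)
    (hV : Differentiable ℝ V) (q u a b : Fin n → ℝ) :
    fderiv ℝ (fun p : (Fin n → ℝ) × (Fin n → ℝ) =>
        (1 / 2) * (∑ i, ∑ j, G p.1 i j * p.2 i * p.2 j) - V p.1) (q, u) (a, b)
    = (1 / 2) * (∑ i, ∑ j,
        (fderiv ℝ (fun p => G p i j) q a * u i * u j
          + G q i j * b i * u j + G q i j * u i * b j)) - fderiv ℝ V q a := by
  set Fst := ContinuousLinearMap.fst ℝ (Fin n → ℝ) (Fin n → ℝ) with hFst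
  have hGij : ∀ i j : Fin n, HasFDerivAt (fun p : (Fin n → ℝ) × (Fin n → ℝ) => G p.1 i j)
      ((fderiv ℝ (fun q => G q i j) q).comp Fst) (q, u) :=
    fun i j => ((hG i j).differentiableAt.hasFDerivAt).comp (q, u) hasFDerivAt_fst
  have hpi : ∀ i : Fin n, HasFDerivAt (fun p : (Fin n → ℝ) × (Fin n → ℝ) => p.2 i)
      ((proj i).comp (ContinuousLinearMap.snd ℝ (Fin n → ℝ) (Fin n → ℝ))) (q, u) :=
    fun i => ((proj i).comp (ContinuousLinearMap.snd ℝ (Fin n → ℝ) (Fin n → ℝ))).hasFDerivAt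
  have hVc : HasFDerivAt (fun p : (Fin n → ℝ) × (Fin n → ℝ) => V p.1)
      ((fderiv ℝ V q).comp Fst) (q, u) :=
    ((hV q).hasFDerivAt).comp (q, u) hasFDerivAt_fst
  have hterm : ∀ i j : Fin n, HasFDerivAt
      (fun p : (Fin n → ℝ) × (Fin n → ℝ) => G p.1 i j * p.2 i * p.2 j)
      ((G q i j * u i) • ((proj j).comp (ContinuousLinearMap.snd ℝ (Fin n → ℝ) (Fin n → ℝ)))
        + u j • (G q i j • ((proj i).comp (ContinuousLinearMap.snd ℝ (Fin n → ℝ) (Fin n → ℝ)))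
          + u i • ((fderiv ℝ (fun q => G q i j) q).comp Fst))) (q, u) :=
    fun i j => ((hGij i j).mul (hpi i)).mul (hpi j)
  have H := ((HasFDerivAt.fun_sum (fun i (_ : i ∈ Finset.univ) =>
      HasFDerivAt.fun_sum (fun j (_ : j ∈ Finset.univ) => hterm i j))).const_mul ((1:ℝ)/2)).fun_sub hVc
  have hf := H.fderiv
  rw [hf]
  simp [ContinuousLinearMap.sub_apply, ContinuousLinearMap.smul_apply,
    ContinuousLinearMap.add_apply, ContinuousLinearMap.comp_apply,
    ContinuousLinearMap.sum_apply, Finset.mul_sum, smul_eq_mul, hFst, coe_fst']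
  congr 1
  funext i
  exact Finset.sum_congr rfl fun j _ => by ring

lemma sum_swap13 {n : ℕ} (A : Fin n → Fin n → Fin n → ℝ) :
    ∑ i, ∑ j, ∑ k, A i j k = ∑ i, ∑ j, ∑ k, A k j i := by
  calc ∑ i, ∑ j, ∑ k, A i j k
      = ∑ i, ∑ k, ∑ j, A i j k :=
        Finset.sum_congr rfl fun i _ => Finset.sum_comm
    _ = ∑ k, ∑ i, ∑ j, A i j k := Finset.sum_comm
    _ = ∑ i, ∑ j, ∑ k, A k j i :=
        Finset.sum_congr rfl fun i _ => Finset.sum_comm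

lemma sum_swap23 {n : ℕ} (A : Fin n → Fin n → Fin n → ℝ) :
    ∑ i, ∑ j, ∑ k, A i j k = ∑ i, ∑ j, ∑ k, A i k j :=
  Finset.sum_congr rfl fun _ _ => Finset.sum_comm

open ContinuousLinearMap in
lemma fderiv_coord_eq {n : ℕ} (Z : (Fin n → ℝ) → (Fin n → ℝ)) (hZ : Differentiable ℝ Z)
    (q : Fin n → ℝ) (i : Fin n) :
    fderiv ℝ (fun p => Z p i) q = (proj i).comp (fderiv ℝ Z q) := by
  exact HasFDerivAt.fderiv
    ((ContinuousLinearMap.hasFDerivAt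
      (proj i : ((Fin n → ℝ) →L[ℝ] ℝ))).comp q (hZ q).hasFDerivAt)

lemma fderiv_coord {n : ℕ} (Z : (Fin n → ℝ) → (Fin n → ℝ)) (hZ : Differentiable ℝ Z)
    (q u : Fin n → ℝ) (i : Fin n) :
    fderiv ℝ Z q u i = ∑ k, u k * fderiv ℝ (fun p => Z p i) q (Pi.single k 1) := by
  have hu : u = ∑ k, u k • (Pi.single k 1 : Fin n → ℝ) := by
    funext j
    simp [Finset.sum_apply, Pi.single_apply]
  conv_lhs => rw [hu]
  rw [map_sum]
  simp only [map_smul, Finset.sum_apply, Pi.smul_apply, smul_eq_mul]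
  exact Finset.sum_congr rfl fun k _ => by rw [fderiv_coord_eq Z hZ q i]; simp

/-- The key identity: `Z^{TQ}[L] = ½ (£_Z G)(u,u) − Z[V]`. -/
lemma tangentLift_eq {n : ℕ} (G : (Fin n → ℝ) → Matrix (Fin n) (Fin n) ℝ)
    (V : (Fin n → ℝ) → ℝ) (Z : (Fin n → ℝ) → (Fin n → ℝ))
    (hG : ∀ i j, Differentiable ℝ fun q => G q i j)
    (hV : Differentiable ℝ V) (hZ : Differentiable ℝ Z) (q u : Fin n → ℝ) :
    tangentLift Z
      (fun p => (1 / 2) * (∑ i, ∑ j, G p.1 i j * p.2 i * p.2 j) - V p.1) q u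
    = (1 / 2) * lieDerivMetric G Z q u - fderiv ℝ V q (Z q) := by
  unfold tangentLift
  rw [fderiv_L G V hG hV q u (Z q) (fderiv ℝ Z q u)]
  unfold lieDerivMetric
  congr 2
  have hA : (∑ i, ∑ j, G q i j * fderiv ℝ Z q u i * u j)
      = ∑ i, ∑ j, (∑ k, G q k j * fderiv ℝ (fun p => Z p k) q (Pi.single i 1)) * u i * u j := by
    calc (∑ i, ∑ j, G q i j * fderiv ℝ Z q u i * u j)
        = ∑ i, ∑ j, ∑ k, G q i j
            * (u k * fderiv ℝ (fun p => Z p i) q (Pi.single k 1)) * u j := by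
          refine Finset.sum_congr rfl fun i _ => Finset.sum_congr rfl fun j _ => ?_
          rw [fderiv_coord Z hZ q u i, Finset.mul_sum, Finset.sum_mul]
      _ = ∑ i, ∑ j, ∑ k, G q k j
            * (u i * fderiv ℝ (fun p => Z p k) q (Pi.single i 1)) * u j := sum_swap13 _
      _ = ∑ i, ∑ j, (∑ k, G q k j * fderiv ℝ (fun p => Z p k) q (Pi.single i 1)) * u i * u j := by
          refine Finset.sum_congr rfl fun i _ => Finset.sum_congr rfl fun j _ => ?_
          rw [Finset.sum_mul, Finset.sum_mul]
          exact Finset.sum_congr rfl fun k _ => by ring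
  have hB : (∑ i, ∑ j, G q i j * u i * fderiv ℝ Z q u j)
      = ∑ i, ∑ j, (∑ k, G q i k * fderiv ℝ (fun p => Z p k) q (Pi.single j 1)) * u i * u j := by
    calc (∑ i, ∑ j, G q i j * u i * fderiv ℝ Z q u j)
        = ∑ i, ∑ j, ∑ k, G q i j * u i
            * (u k * fderiv ℝ (fun p => Z p j) q (Pi.single k 1)) := by
          refine Finset.sum_congr rfl fun i _ => Finset.sum_congr rfl fun j _ => ?_
          rw [fderiv_coord Z hZ q u j, Finset.mul_sum]
      _ = ∑ i, ∑ j, ∑ k, G q i k * u i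
            * (u j * fderiv ℝ (fun p => Z p k) q (Pi.single j 1)) := sum_swap23 _
      _ = ∑ i, ∑ j, (∑ k, G q i k * fderiv ℝ (fun p => Z p k) q (Pi.single j 1)) * u i * u j := by
          refine Finset.sum_congr rfl fun i _ => Finset.sum_congr rfl fun j _ => ?_
          rw [Finset.sum_mul, Finset.sum_mul]
          exact Finset.sum_congr rfl fun k _ => by ring
  simp only [add_mul, Finset.sum_add_distrib]
  rw [hA, hB]

/-- Let `Z` be a section of the constraint distribution `D` of a nonholonomic
mechanical system with Lagrangian `L = ½ G(u,u) − V`.  Then `Z^{TQ}[L] = 0` on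
`D` if and only if `Z[V] = 0` and `(£_Z G)(u,u) = 0` for all `u ∈ D`. -/
theorem stmt16 {n : ℕ} (G : (Fin n → ℝ) → Matrix (Fin n) (Fin n) ℝ)
    (V : (Fin n → ℝ) → ℝ) (Z : (Fin n → ℝ) → (Fin n → ℝ))
    (D : (Fin n → ℝ) → Submodule ℝ (Fin n → ℝ))
    (hG : ∀ i j, Differentiable ℝ fun q => G q i j)
    (hsym : ∀ q i j, G q i j = G q j i)
    (hV : Differentiable ℝ V) (hZ : Differentiable ℝ Z)
    (hZD : ∀ q, Z q ∈ D q) :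
    (∀ q u, u ∈ D q →
        tangentLift Z
          (fun p => (1 / 2) * (∑ i, ∑ j, G p.1 i j * p.2 i * p.2 j) - V p.1)
          q u = 0)
      ↔ ((∀ q, fderiv ℝ V q (Z q) = 0)
          ∧ (∀ q u, u ∈ D q → lieDerivMetric G Z q u = 0)) := by
  constructor
  · intro h
    have h0 : ∀ q, fderiv ℝ V q (Z q) = 0 := by
      intro q
      have hq := h q 0 (D q).zero_mem
      rw [tangentLift_eq G V Z hG hV hZ q 0] at hq
      have hl0 : lieDerivMetric G Z q 0 = 0 := by simp [lieDerivMetric]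
      rw [hl0] at hq
      linarith
    refine ⟨h0, fun q u hu => ?_⟩
    have hq := h q u hu
    rw [tangentLift_eq G V Z hG hV hZ q u, h0 q] at hq
    linarith
  · rintro ⟨h1, h2⟩ q u hu
    rw [tangentLift_eq G V Z hG hV hZ q u, h1 q, h2 q u hu]
    ring
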